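/- Let A be a commutative ring with an ℕ-grading 𝒜 : ℕ → Submodule ℤ A making A a graded ℤ-algebra. If A is torsion-free as a ℤ-module (equivalently flat over ℤ), then the scheme Proj 𝒜 is flat over Spec ℤ, i.e., the unique morphism of schemes Proj 𝒜 ⟶ Spec ℤ is a flat morphism. -/

import Mathlib

open AlgebraicGeometry

section TorsionFreeFlat

open TensorProduct LinearMap

variable {M N : Type*} [AddCommGroup M] [Module ℤ M] [AddCommGroup N] [Module ℤ N]

private lemma smul_injective_of_flat [Module.Flat ℤ N] (n : ℤ) (hn : n ≠ 0) :
    Function.Injective (fun x : N => n • x) := by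
  have hinj : Function.Injective (n • (LinearMap.id : ℤ →ₗ[ℤ] ℤ)) := by
    intro a b hab
    simpa using smul_right_injective ℤ hn (by simpa using hab)
  have h1 : Function.Injective ((n • (LinearMap.id : ℤ →ₗ[ℤ] ℤ)).rTensor N) :=
    Module.Flat.rTensor_preserves_injective_linearMap _ hinj
  intro a b hab
  have key : ∀ x : N, (n • (LinearMap.id : ℤ →ₗ[ℤ] ℤ)).rTensor N
      ((TensorProduct.lid ℤ N).symm x) = (TensorProduct.lid ℤ N).symm (n • x) := by
    intro x
    simp only [TensorProduct.lid_symm_apply, LinearMap.rTensor_tmul, LinearMap.smul_apply,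
      LinearMap.id_coe, id_eq, ← Int.cast_smul_eq_zsmul ℤ, Int.cast_id]
    apply (TensorProduct.lid ℤ N).injective
    simp
    exact (@MulAction.one_smul ℤ N _ ‹Module ℤ N›.toDistribMulAction.toMulAction _).symm
  have h2 : (TensorProduct.lid ℤ N).symm a = (TensorProduct.lid ℤ N).symm b := by
    apply h1
    rw [key a, key b]
    exact congrArg (TensorProduct.lid ℤ N).symm hab
  exact (TensorProduct.lid ℤ N).symm.injective h2

private lemma flat_of_injective_linearMap [Module.Flat ℤ N] (f : M →ₗ[ℤ] N)
    (hf : Function.Injective f) : Module.Flat ℤ M := by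
  rw [Module.Flat.iff_rTensor_injective]
  intro I _
  obtain ⟨n, rfl⟩ := (IsPrincipalIdealRing.principal I).principal
  rcases eq_or_ne n 0 with rfl | hn
  · haveI : Subsingleton (Submodule.span ℤ ({(0 : ℤ)} : Set ℤ)) := by
      have h0 : ∀ z : ℤ, z ∈ Submodule.span ℤ ({(0 : ℤ)} : Set ℤ) → z = 0 := by
        intro z hz
        obtain ⟨c, hc⟩ := Submodule.mem_span_singleton.mp hz
        simp [← hc]
      constructor
      rintro ⟨a, ha⟩ ⟨b, hb⟩
      ext
      simp [h0 a ha, h0 b hb]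
    intro a b _
    exact Subsingleton.elim a b
  · have hMinj : Function.Injective (fun m : M => n • m) := by
      intro a b h
      apply hf
      apply smul_injective_of_flat (N := N) n hn
      simpa using congrArg f h
    have hmem : n ∈ Submodule.span ℤ ({n} : Set ℤ) := Submodule.mem_span_singleton_self n
    have hbij : Function.Bijective
        (LinearMap.toSpanSingleton ℤ (Submodule.span ℤ ({n} : Set ℤ)) ⟨n, hmem⟩) := by
      constructor
      · intro a b hab
        have h := congrArg Subtype.val hab
        simp only [LinearMap.toSpanSingleton_apply, SetLike.mk_smul_mk, smul_eq_mul] at h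
        exact mul_right_cancel₀ hn h
      · rintro ⟨y, hy⟩
        obtain ⟨c, hc⟩ := Submodule.mem_span_singleton.mp hy
        exact ⟨c, Subtype.ext (by simpa using hc)⟩
    let e : ℤ ≃ₗ[ℤ] (Submodule.span ℤ ({n} : Set ℤ)) := LinearEquiv.ofBijective _ hbij
    have comp_eq : (Submodule.span ℤ ({n} : Set ℤ)).subtype ∘ₗ e.toLinearMap
        = n • (LinearMap.id : ℤ →ₗ[ℤ] ℤ) := by
      ext
      simp [e, mul_comm]
    have hcomp : Function.Injective
        (((Submodule.span ℤ ({n} : Set ℤ)).subtype ∘ₗ e.toLinearMap).rTensor M) := by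
      rw [comp_eq]
      have h2 : ((n • (LinearMap.id : ℤ →ₗ[ℤ] ℤ)).rTensor M)
          = n • (LinearMap.id : ℤ ⊗[ℤ] M →ₗ[ℤ] ℤ ⊗[ℤ] M) := by
        apply TensorProduct.ext'
        intro x y
        change ((n • LinearMap.id) x) ⊗ₜ y = n • (x ⊗ₜ y)
        rw [TensorProduct.smul_tmul']
        rfl
      rw [h2]
      intro a b hab
      change n • a = n • b at hab
      have h4 := congrArg (TensorProduct.lid ℤ M).toLinearMap hab
      simp only [LinearMap.map_smul, LinearEquiv.coe_coe] at h4
      apply (TensorProduct.lid ℤ M).injective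
      apply hMinj
      simpa only [← Int.cast_smul_eq_zsmul ℤ, Int.cast_id] using h4
    rw [LinearMap.rTensor_comp] at hcomp
    have hsurj : Function.Surjective (e.toLinearMap.rTensor M) :=
      LinearMap.rTensor_surjective M e.surjective
    intro a b hab
    obtain ⟨a', rfl⟩ := hsurj a
    obtain ⟨b', rfl⟩ := hsurj b
    exact congrArg _ (hcomp (by simpa using hab))

end TorsionFreeFlat

private lemma flat_int_of_ringHom_injective {S T : Type} [CommRing S] [CommRing T]
    [Module.Flat ℤ S] (f : T →+* S) (hf : Function.Injective f) : Module.Flat ℤ T :=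
  flat_of_injective_linearMap f.toAddMonoidHom.toIntLinearMap hf

/-- A ring hom out of a localization of `ℤ` into a `ℤ`-flat ring is flat. -/
private lemma ringHom_flat_of_isLocalization {S T : Type} [CommRing S] [CommRing T]
    (p : Submonoid ℤ) [IsLocalization p S]
    [Module.Flat ℤ T] (g : S →+* T) : RingHom.Flat g := by
  algebraize [g]
  haveI := isLocalizedModule_id (R := ℤ) p T S
  exact Module.Flat.of_isLocalizedModule (Rp := S) (S := p)
    (f := (LinearMap.id : T →ₗ[ℤ] T))

theorem proj_flat_over_spec_int
    {A : Type} [CommRing A] (𝒜 : ℕ → Submodule ℤ A) [GradedAlgebra 𝒜]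
    (hA : Module.Flat ℤ A) :
    ∀ x : Proj 𝒜,
      RingHom.Flat ((specZIsTerminal.from (Proj 𝒜)).stalkMap x).hom := by
  intro x
  haveI : x.asHomogeneousIdeal.toIdeal.IsPrime := x.isPrime
  haveI := hA
  -- the stalk of Proj is ℤ-flat
  haveI flatLoc : Module.Flat ℤ (Localization x.asHomogeneousIdeal.toIdeal.primeCompl) :=
    Module.Flat.trans ℤ A _
  haveI flatHL : Module.Flat ℤ
      (HomogeneousLocalization.AtPrime 𝒜 x.asHomogeneousIdeal.toIdeal) :=
    flat_int_of_ringHom_injective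
      (algebraMap (HomogeneousLocalization.AtPrime 𝒜 x.asHomogeneousIdeal.toIdeal)
        (Localization x.asHomogeneousIdeal.toIdeal.primeCompl))
      (HomogeneousLocalization.val_injective _)
  haveI flatHL' : Module.Flat ℤ
      ↑(CommRingCat.of (HomogeneousLocalization.AtPrime 𝒜 x.asHomogeneousIdeal.toIdeal)) :=
    flatHL
  haveI flatStalk : Module.Flat ℤ ((Proj 𝒜).presheaf.stalk x) :=
    flat_int_of_ringHom_injective (Proj.stalkIso 𝒜 x).hom.hom
      ((Proj.stalkIso 𝒜 x).commRingCatIsoToRingEquiv.injective)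
  set y := (specZIsTerminal.from (Proj 𝒜)).base x with hy
  haveI : y.asIdeal.IsPrime := y.isPrime
  haveI : IsLocalization (show Submonoid ℤ from y.asIdeal.primeCompl)
      ((Spec (CommRingCat.of ℤ)).presheaf.stalk y) := by
    have h := StructureSheaf.IsLocalization.to_stalk ℤ y
    have e : (StructureSheaf.stalkAlgebra ℤ y) = Ring.toIntAlgebra _ :=
      Subsingleton.elim _ _
    rw [e] at h
    exact h
  exact ringHom_flat_of_isLocalization (show Submonoid ℤ from y.asIdeal.primeCompl) _
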